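/- For each 0 < θ < 1 there exists ε > 0 such that Δ(q,z) = ∑_k (‖k‖^{‖k‖}/k^k) |q|^{#k} |z^k| is bounded on {q ∈ ℂ : |q| < ε} × {z ∈ l¹ : ‖z‖₁ ≤ θ}. -/

import Mathlib

open scoped BigOperators
open Real Finset

lemma aux_multinomial_subset {S T : Finset ℕ} (h : S ⊆ T) (f : ℕ → ℕ)
    (hf : ∀ i ∈ T, i ∉ S → f i = 0) : Nat.multinomial T f = Nat.multinomial S f := by
  have hs : ∑ i ∈ S, f i = ∑ i ∈ T, f i := Finset.sum_subset h (fun i hi hni => hf i hi hni)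
  have hp : ∏ i ∈ S, (f i).factorial = ∏ i ∈ T, (f i).factorial :=
    Finset.prod_subset h (fun i hi hni => by rw [hf i hi hni]; rfl)
  have hpos : 0 < ∏ i ∈ S, (f i).factorial :=
    Finset.prod_pos fun i _ => (f i).factorial_pos
  apply Nat.eq_of_mul_eq_mul_left hpos
  calc (∏ i ∈ S, (f i).factorial) * Nat.multinomial T f
      = (∏ i ∈ T, (f i).factorial) * Nat.multinomial T f := by rw [hp]
    _ = (∑ i ∈ T, f i).factorial := Nat.multinomial_spec T f
    _ = (∑ i ∈ S, f i).factorial := by rw [hs]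
    _ = (∏ i ∈ S, (f i).factorial) * Nat.multinomial S f := (Nat.multinomial_spec S f).symm

lemma aux_pow_le (n : ℕ) : (n:ℝ)^n ≤ n.factorial * Real.exp n := by
  have h0 : (0:ℝ) < (n.factorial : ℝ) := by positivity
  rw [← div_le_iff₀' h0]
  calc (n:ℝ)^n / n.factorial ≤ ∑ i ∈ range (n+1), (n:ℝ)^i / i.factorial := by
        exact Finset.single_le_sum (f := fun i => (n:ℝ)^i / i.factorial) (fun i _ => by positivity) (self_mem_range_succ n)
    _ ≤ Real.exp n := Real.sum_le_exp_of_nonneg (by positivity) _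

lemma aux_e_le (k : ℕ) (hk : 1 ≤ k) : Real.exp 1 ≤ (((k:ℝ)+1)/k)^(k+1) := by
  have hk0 : (0:ℝ) < k := by exact_mod_cast hk
  have hx : Real.exp (1/((k:ℝ)+1)) ≤ ((k:ℝ)+1)/k := by
    have h := Real.add_one_le_exp (-(1/((k:ℝ)+1)))
    have h1 : (0:ℝ) < (k:ℝ)/((k:ℝ)+1) := by positivity
    have h2 : (k:ℝ)/((k:ℝ)+1) ≤ Real.exp (-(1/((k:ℝ)+1))) := by
      have : -(1/((k:ℝ)+1)) + 1 = (k:ℝ)/((k:ℝ)+1) := by field_simp; ring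
      linarith [h, this]
    rw [Real.exp_neg] at h2
    have h3 : Real.exp (1/((k:ℝ)+1)) ≤ ((k:ℝ)/((k:ℝ)+1))⁻¹ := by
      rw [← inv_inv (Real.exp _)]
      exact inv_anti₀ (by positivity) h2
    simpa [one_div, inv_div] using h3
  have hpow := pow_le_pow_left₀ (Real.exp_nonneg _) hx (k+1)
  calc Real.exp 1 = Real.exp (1/((k:ℝ)+1)) ^ (k+1) := by
        rw [← Real.exp_nat_mul]
        congr 1
        push_cast
        field_simp
    _ ≤ (((k:ℝ)+1)/k)^(k+1) := hpow

lemma aux_fact_le (n : ℕ) (hn : 1 ≤ n) :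
    (n.factorial : ℝ) * Real.exp n ≤ Real.exp 1 * n * (n:ℝ)^n := by
  induction n with
  | zero => omega
  | succ k ih =>
    rcases Nat.lt_or_ge 1 (k+1) with h1 | h1
    · have hk : 1 ≤ k := by omega
      have ihk := ih hk
      have hk0 : (0:ℝ) < k := by exact_mod_cast hk
      have key : Real.exp 1 * (k:ℝ) * (k:ℝ)^k ≤ ((k:ℝ)+1)^(k+1) := by
        have := aux_e_le k hk
        have h2 : Real.exp 1 * (k:ℝ)^(k+1) ≤ ((k:ℝ)+1)^(k+1) := by
          have h3 := mul_le_mul_of_nonneg_right this (by positivity : (0:ℝ) ≤ (k:ℝ)^(k+1))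
          calc Real.exp 1 * (k:ℝ)^(k+1) ≤ (((k:ℝ)+1)/k)^(k+1) * (k:ℝ)^(k+1) := h3
            _ = ((k:ℝ)+1)^(k+1) := by rw [div_pow, div_mul_cancel₀]; positivity
        calc Real.exp 1 * (k:ℝ) * (k:ℝ)^k = Real.exp 1 * (k:ℝ)^(k+1) := by ring
          _ ≤ _ := h2
      have expand : ((k+1).factorial : ℝ) * Real.exp (k+1)
          = ((k:ℝ)+1) * Real.exp 1 * ((k.factorial : ℝ) * Real.exp k) := by
        rw [Nat.factorial_succ]
        push_cast
        rw [Real.exp_add]  -- exp(k+1) = exp k * exp 1? careful: (↑(k+1)) = ↑k + 1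
        ring
      have goal2 : ((k+1).factorial : ℝ) * Real.exp ((k:ℝ)+1)
          ≤ Real.exp 1 * ((k:ℝ)+1) * ((k:ℝ)+1)^(k+1) := by
        rw [expand]
        calc ((k:ℝ)+1) * Real.exp 1 * ((k.factorial : ℝ) * Real.exp k)
            ≤ ((k:ℝ)+1) * Real.exp 1 * (Real.exp 1 * (k:ℝ) * (k:ℝ)^k) := by
              apply mul_le_mul_of_nonneg_left ihk (by positivity)
          _ ≤ ((k:ℝ)+1) * Real.exp 1 * ((k:ℝ)+1)^(k+1) := by
              apply mul_le_mul_of_nonneg_left key (by positivity)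
          _ = Real.exp 1 * ((k:ℝ)+1) * ((k:ℝ)+1)^(k+1) := by ring
      have hcast : ((k+1:ℕ):ℝ) = (k:ℝ)+1 := by push_cast; ring
      rw [hcast]
      exact goal2
    · have hk0 : k = 0 := by omega
      subst hk0
      simp


set_option maxHeartbeats 1000000

/-- For each `0 < θ < 1` there is `ε > 0` such that
`Δ(q,z) = ∑_k (‖k‖^{‖k‖}/k^k) |q|^{#k} |z^k|` is bounded on
`{|q| < ε} × {‖z‖₁ ≤ θ}` (all finite partial sums are bounded by a common constant `M`). -/
theorem Delta_bounded_near_zero (θ : ℝ) (hθ0 : 0 < θ) (hθ1 : θ < 1) :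
    ∃ ε : ℝ, 0 < ε ∧ ∃ M : ℝ,
      ∀ (q : ℂ) (z : lp (fun _ : ℕ => ℂ) 1), ‖q‖ < ε → ‖z‖ ≤ θ →
        ∀ s : Finset (ℕ →₀ ℕ),
          (∑ k ∈ s,
            (((k.sum fun _ v => v : ℕ) : ℝ) ^ (k.sum fun _ v => v : ℕ) /
                ∏ n ∈ k.support, (k n : ℝ) ^ k n) *
              ‖q‖ ^ k.support.card *
              ∏ n ∈ k.support, ‖z n‖ ^ k n) ≤ M := by

  classical
  set r : ℝ := (1 + θ) / (2 * θ) with hr_def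
  have hr1 : 1 < r := by
    rw [hr_def, lt_div_iff₀ (by linarith)]
    linarith
  have hrθ : r * θ = (1 + θ) / 2 := by
    rw [hr_def]
    field_simp
  set σ : ℝ := (1 + θ) / 2 with hσ_def
  have hσ0 : 0 ≤ σ := by positivity
  have hσ1 : σ < 1 := by rw [hσ_def]; linarith
  have hσθ : 0 < σ := by positivity
  clear_value r σ
  refine ⟨(r - 1) / Real.exp 1, div_pos (by linarith) (Real.exp_pos 1), (1 - σ)⁻¹, ?_⟩
  intro q z hq hz s
  set B : (ℕ →₀ ℕ) → ℝ := fun k =>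
    (Nat.multinomial k.support ⇑k : ℝ) * ∏ n ∈ k.support, (r * ‖z n‖) ^ k n
    with hB_def
  have hB_nonneg : ∀ k, 0 ≤ B k := by
    intro k
    apply mul_nonneg (Nat.cast_nonneg _)
    exact Finset.prod_nonneg fun n _ => pow_nonneg (by positivity) _
  -- Step 1: termwise bound
  have step1 : ∀ k ∈ s,
      (((k.sum fun _ v => v : ℕ) : ℝ) ^ (k.sum fun _ v => v : ℕ) /
          ∏ n ∈ k.support, (k n : ℝ) ^ k n) *
        (‖q‖) ^ k.support.card *
        (∏ n ∈ k.support, (‖z n‖) ^ k n) ≤ B k := by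
    intro k _
    set S := k.support with hS
    set N : ℕ := k.sum fun _ v => v with hN_def
    have hN : N = ∑ n ∈ S, k n := rfl
    have hP : (0:ℝ) < ∏ n ∈ S, (k n : ℝ) ^ k n := by
      apply Finset.prod_pos
      intro n hn
      have : 0 < k n := Nat.pos_of_ne_zero (Finsupp.mem_support_iff.1 hn)
      positivity
    rw [div_mul_eq_mul_div, div_mul_eq_mul_div, div_le_iff₀ hP]
    have hq' : ‖q‖ ≤ (r - 1) / Real.exp 1 := le_of_lt hq
    have hq0 : 0 ≤ ‖q‖ := norm_nonneg q
    -- key: N^N ≤ multinomial * ∏ ((k n)! * exp (k n))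
    have key1 : ((N:ℝ)) ^ N ≤ (Nat.multinomial S ⇑k : ℝ) *
        ∏ n ∈ S, (((k n).factorial : ℝ) * Real.exp (k n)) := by
      calc ((N:ℝ)) ^ N ≤ (N.factorial : ℝ) * Real.exp N := aux_pow_le N
        _ = (Nat.multinomial S ⇑k : ℝ) *
            ∏ n ∈ S, (((k n).factorial : ℝ) * Real.exp (k n)) := by
          have hfact : (N.factorial : ℝ) =
              (∏ n ∈ S, ((k n).factorial : ℝ)) * (Nat.multinomial S ⇑k : ℝ) := by
            rw [← Nat.cast_prod, ← Nat.cast_mul, Nat.multinomial_spec S ⇑k, hN]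
          have hexp : Real.exp N = ∏ n ∈ S, Real.exp (k n) := by
            rw [hN, ← Real.exp_sum]
            congr 1
            push_cast
            rfl
          rw [hfact, hexp, mul_assoc, mul_comm (∏ n ∈ S, ((k n).factorial:ℝ)), mul_assoc,
            ← Finset.prod_mul_distrib]
          congr 1
          exact Finset.prod_congr rfl fun x _ => mul_comm _ _
    -- termwise product bound
    have key2 : ∀ n ∈ S,
        (((k n).factorial : ℝ) * Real.exp (k n)) * (‖q‖ * (‖z n‖) ^ k n)
          ≤ (r * ‖z n‖) ^ k n * ((k n : ℝ) ^ k n) := by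
      intro n hn
      have hkn : 1 ≤ k n := Nat.pos_of_ne_zero (Finsupp.mem_support_iff.1 hn)
      have h1 : ((k n).factorial : ℝ) * Real.exp (k n) ≤ Real.exp 1 * (k n) * (k n : ℝ) ^ k n :=
        aux_fact_le (k n) hkn
      have h2 : ((k n : ℝ)) ≤ r ^ k n / (r - 1) := by
        rw [le_div_iff₀ (by linarith)]
        have := one_add_mul_le_pow (a := r - 1) (by linarith) (k n)
        have h3 : 1 + (k n : ℝ) * (r - 1) ≤ r ^ k n := by
          simpa using this
        nlinarith [Nat.cast_nonneg (α := ℝ) (k n)]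
      have hq2 : ((k n).factorial : ℝ) * Real.exp (k n) * ‖q‖ ≤
          r ^ k n * (k n : ℝ) ^ k n := by
        have e1 : ((k n).factorial : ℝ) * Real.exp (k n) * ‖q‖ ≤
            (Real.exp 1 * (k n) * (k n : ℝ) ^ k n) * ((r - 1) / Real.exp 1) := by
          apply mul_le_mul h1 hq' hq0
          positivity
        have e2 : (Real.exp 1 * (k n) * (k n : ℝ) ^ k n) * ((r - 1) / Real.exp 1) ≤
            (Real.exp 1 * (r ^ k n / (r - 1)) * (k n : ℝ) ^ k n) * ((r - 1) / Real.exp 1) := by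
          apply mul_le_mul_of_nonneg_right _
            (le_of_lt (div_pos (by linarith) (Real.exp_pos 1)))
          apply mul_le_mul_of_nonneg_right _ (by positivity)
          exact mul_le_mul_of_nonneg_left h2 (by positivity)
        have e3 : (Real.exp 1 * (r ^ k n / (r - 1)) * (k n : ℝ) ^ k n) * ((r - 1) / Real.exp 1)
            = r ^ k n * (k n : ℝ) ^ k n := by
          field_simp [Real.exp_ne_zero, (show r - 1 ≠ 0 by linarith)]
        linarith
      calc (((k n).factorial : ℝ) * Real.exp (k n)) * (‖q‖ * (‖z n‖) ^ k n)
          = (((k n).factorial : ℝ) * Real.exp (k n) * ‖q‖) * (‖z n‖) ^ k n := by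
            ring
        _ ≤ (r ^ k n * (k n : ℝ) ^ k n) * (‖z n‖) ^ k n := by
            apply mul_le_mul_of_nonneg_right hq2 (by positivity)
        _ = (r * ‖z n‖) ^ k n * ((k n : ℝ) ^ k n) := by
            rw [mul_pow]
            ring
    have habsq : (‖q‖) ^ S.card * (∏ n ∈ S, (‖z n‖) ^ k n)
        = ∏ n ∈ S, (‖q‖ * (‖z n‖) ^ k n) := by
      rw [Finset.prod_mul_distrib, Finset.prod_const]
    calc ((N:ℝ)) ^ N * (‖q‖) ^ S.card * (∏ n ∈ S, (‖z n‖) ^ k n)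
        = ((N:ℝ)) ^ N * ∏ n ∈ S, (‖q‖ * (‖z n‖) ^ k n) := by
          rw [mul_assoc, habsq]
      _ ≤ ((Nat.multinomial S ⇑k : ℝ) * ∏ n ∈ S, (((k n).factorial : ℝ) * Real.exp (k n))) *
            ∏ n ∈ S, (‖q‖ * (‖z n‖) ^ k n) := by
          apply mul_le_mul_of_nonneg_right key1
          exact Finset.prod_nonneg fun n _ => by positivity
      _ = (Nat.multinomial S ⇑k : ℝ) *
            ∏ n ∈ S, ((((k n).factorial : ℝ) * Real.exp (k n)) *
              (‖q‖ * (‖z n‖) ^ k n)) := by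
          rw [mul_assoc, ← Finset.prod_mul_distrib]
      _ ≤ (Nat.multinomial S ⇑k : ℝ) *
            ∏ n ∈ S, ((r * ‖z n‖) ^ k n * ((k n : ℝ) ^ k n)) := by
          apply mul_le_mul_of_nonneg_left _ (Nat.cast_nonneg _)
          apply Finset.prod_le_prod
          · intro n _
            positivity
          · exact key2
      _ = B k * ∏ n ∈ S, (k n : ℝ) ^ k n := by
          rw [hB_def, Finset.prod_mul_distrib]
          ring
  -- Step 2: sum of B over s is bounded
  have step2 : ∑ k ∈ s, B k ≤ (1 - σ)⁻¹ := by
    set T : Finset ℕ := s.sup fun k => k.support with hT_def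
    set N₀ : ℕ := s.sup fun k => k.sum fun _ v => v with hN₀_def
    have hsub : ∀ k ∈ s, k.support ⊆ T := fun k hk => Finset.le_sup hk
    have hdeg : ∀ k ∈ s, (k.sum fun _ v => v) ≤ N₀ := fun k hk =>
      Finset.le_sup (f := fun k : ℕ →₀ ℕ => k.sum fun _ v => v) hk
    -- finite sum of |z n| over T
    have hzT : ∑ n ∈ T, ‖z n‖ ≤ θ := by
      have h1 := lp.sum_rpow_le_norm_rpow (p := 1) (by norm_num) z T
      simp only [ENNReal.toReal_one, Real.rpow_one] at h1
      calc ∑ n ∈ T, ‖z n‖ = ∑ n ∈ T, ‖z n‖ := by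
            rfl
        _ ≤ ‖z‖ := h1
        _ ≤ θ := hz
    have hrz : ∑ n ∈ T, (r * ‖z n‖) ≤ σ := by
      rw [← Finset.mul_sum, ← hrθ]
      exact mul_le_mul_of_nonneg_left hzT (by linarith)
    have hrz0 : 0 ≤ ∑ n ∈ T, (r * ‖z n‖) :=
      Finset.sum_nonneg fun n _ => by positivity
    have fib : ∑ k ∈ s, B k =
        ∑ N ∈ Finset.range (N₀ + 1),
          ∑ k ∈ s.filter fun k => (k.sum fun _ v => v) = N, B k := by
      exact (Finset.sum_fiberwise_of_maps_to
        (fun k hk => Finset.mem_range.2 (Nat.lt_succ_of_le (hdeg k hk))) B).symm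
    rw [fib]
    have inner : ∀ N ∈ Finset.range (N₀ + 1),
        ∑ k ∈ s.filter (fun k => (k.sum fun _ v => v) = N), B k ≤ σ ^ N := by
      intro N _
      set sN := s.filter fun k => (k.sum fun _ v => v) = N with hsN
      have hBk : ∀ k ∈ sN, B k =
          (Nat.multinomial T ⇑k : ℝ) * ∏ n ∈ T, (r * ‖z n‖) ^ k n := by
        intro k hk
        obtain ⟨hks, _⟩ := Finset.mem_filter.1 hk
        have hsubk := hsub k hks
        have h1 : Nat.multinomial T ⇑k = Nat.multinomial k.support ⇑k :=
          aux_multinomial_subset hsubk ⇑k (fun i _ hni => Finsupp.notMem_support_iff.1 hni)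
        have h2 : ∏ n ∈ k.support, (r * ‖z n‖) ^ k n
            = ∏ n ∈ T, (r * ‖z n‖) ^ k n :=
          Finset.prod_subset hsubk
            (fun i _ hni => by rw [Finsupp.notMem_support_iff.1 hni, pow_zero])
        rw [hB_def]
        dsimp only
        rw [h1, h2]
      rw [Finset.sum_congr rfl hBk]
      have himg : ∑ k ∈ sN, ((Nat.multinomial T ⇑k : ℝ) *
            ∏ n ∈ T, (r * ‖z n‖) ^ k n) =
          ∑ g ∈ sN.image (fun k : ℕ →₀ ℕ => ⇑k),
            ((Nat.multinomial T g : ℝ) * ∏ n ∈ T, (r * ‖z n‖) ^ g n) := by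
        rw [Finset.sum_image]
        intro a _ b _ hab
        exact DFunLike.coe_injective hab
      rw [himg]
      have hsubset : sN.image (fun k : ℕ →₀ ℕ => ⇑k) ⊆ Finset.piAntidiag T N := by
        intro g hg
        obtain ⟨k, hk, rfl⟩ := Finset.mem_image.1 hg
        obtain ⟨hks, hkN⟩ := Finset.mem_filter.1 hk
        rw [Finset.mem_piAntidiag]
        constructor
        · rw [← hkN]
          exact (Finset.sum_subset (hsub k hks)
            (fun i _ hni => Finsupp.notMem_support_iff.1 hni)).symm
        · intro i hi
          exact hsub k hks (Finsupp.mem_support_iff.2 hi)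
      calc ∑ g ∈ sN.image (fun k : ℕ →₀ ℕ => ⇑k),
            ((Nat.multinomial T g : ℝ) * ∏ n ∈ T, (r * ‖z n‖) ^ g n)
          ≤ ∑ g ∈ Finset.piAntidiag T N,
            ((Nat.multinomial T g : ℝ) * ∏ n ∈ T, (r * ‖z n‖) ^ g n) := by
            apply Finset.sum_le_sum_of_subset_of_nonneg hsubset
            intro g _ _
            apply mul_nonneg (Nat.cast_nonneg _)
            exact Finset.prod_nonneg fun n _ => by positivity
        _ = (∑ n ∈ T, (r * ‖z n‖)) ^ N :=
            (Finset.sum_pow_eq_sum_piAntidiag T (fun n => r * ‖z n‖) N).symm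
        _ ≤ σ ^ N := pow_le_pow_left₀ hrz0 hrz N
    calc ∑ N ∈ Finset.range (N₀ + 1),
          ∑ k ∈ s.filter fun k => (k.sum fun _ v => v) = N, B k
        ≤ ∑ N ∈ Finset.range (N₀ + 1), σ ^ N := Finset.sum_le_sum inner
      _ ≤ ∑' N : ℕ, σ ^ N := Summable.sum_le_tsum _ (fun n _ => by positivity)
          (summable_geometric_of_lt_one hσ0 hσ1)
      _ = (1 - σ)⁻¹ := tsum_geometric_of_lt_one hσ0 hσ1
  calc (∑ k ∈ s, _) ≤ ∑ k ∈ s, B k := Finset.sum_le_sum step1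
    _ ≤ (1 - σ)⁻¹ := step2
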